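/- For every quantifier-free SMT formula F over d real variables (built inductively from atoms w·x + b > 0 and w·x + b ≥ 0, negation, conjunction, and disjunction), the continuous semantic value M_F with the product t-norm satisfies: (i) 0 ≤ M_F(x; B, ε) ≤ 1 for all x ∈ ℝ^d, B, ε; and (ii) for every x ∈ ℝ^d and all sequences (ε_n) of positive reals with ε_n → 0 and (B_n) of reals with B_n·ε_n → +∞, the sequence M_F(x; B_n, ε_n) converges to 1 if F(x) is true and converges to 0 if F(x) is false. -/

import Mathlib

open Filter Topology

/-- Quantifier-free SMT formulas over `d` real variables, built from
linear atoms `w·x + b > 0` and `w·x + b ≥ 0`, negation, conjunction and disjunction. -/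
inductive SMTFormula (d : ℕ) where
  | gt (w : Fin d → ℝ) (b : ℝ) : SMTFormula d
  | ge (w : Fin d → ℝ) (b : ℝ) : SMTFormula d
  | not (F : SMTFormula d) : SMTFormula d
  | and (F₁ F₂ : SMTFormula d) : SMTFormula d
  | or (F₁ F₂ : SMTFormula d) : SMTFormula d

/-- Boolean semantics of a quantifier-free SMT formula. -/
def SMTFormula.sem {d : ℕ} : SMTFormula d → (Fin d → ℝ) → Prop
  | .gt w b, x => (∑ i, w i * x i) + b > 0
  | .ge w b, x => (∑ i, w i * x i) + b ≥ 0
  | .not F, x => ¬ F.sem x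
  | .and F₁ F₂, x => F₁.sem x ∧ F₂.sem x
  | .or F₁ F₂, x => F₁.sem x ∨ F₂.sem x

/-- Continuous semantic value of a formula (CLN model output) with the
product t-norm and t-conorm, scaling factor `B` and offset `ε`. -/
noncomputable def SMTFormula.val {d : ℕ} : SMTFormula d → (Fin d → ℝ) → ℝ → ℝ → ℝ
  | .gt w b, x, B, ε => 1 / (1 + Real.exp (-B * ((∑ i, w i * x i) + b - ε)))
  | .ge w b, x, B, ε => 1 / (1 + Real.exp (-B * ((∑ i, w i * x i) + b + ε)))
  | .not F, x, B, ε => 1 - F.val x B ε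
  | .and F₁ F₂, x, B, ε => F₁.val x B ε * F₂.val x B ε
  | .or F₁ F₂, x, B, ε => F₁.val x B ε + F₂.val x B ε - F₁.val x B ε * F₂.val x B ε

lemma sig_one {a : ℕ → ℝ} (h : Tendsto a atTop atTop) :
    Tendsto (fun n => 1 / (1 + Real.exp (-(a n)))) atTop (𝓝 1) := by
  have h2 : Tendsto (fun n => Real.exp (-(a n))) atTop (𝓝 0) :=
    Real.tendsto_exp_atBot.comp (tendsto_neg_atBot_iff.mpr h)
  have h3 : Tendsto (fun n => 1 + Real.exp (-(a n))) atTop (𝓝 1) := by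
    simpa using tendsto_const_nhds.add h2
  have := (tendsto_const_nhds (x := (1:ℝ))).div h3 (by norm_num)
  simpa [Pi.div_def] using this

lemma sig_zero {a : ℕ → ℝ} (h : Tendsto a atTop atTop) :
    Tendsto (fun n => 1 / (1 + Real.exp (a n))) atTop (𝓝 0) := by
  have h2 : Tendsto (fun n => 1 + Real.exp (a n)) atTop atTop :=
    tendsto_atTop_add_const_left _ 1 (Real.tendsto_exp_atTop.comp h)
  exact h2.inv_tendsto_atTop.congr (fun n => by simp [one_div])

lemma smt_bounds {d : ℕ} (F : SMTFormula d) (x : Fin d → ℝ) (B ε : ℝ) :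
    0 ≤ F.val x B ε ∧ F.val x B ε ≤ 1 := by
  induction F with
  | gt w b =>
      have h := Real.exp_pos (-B * ((∑ i, w i * x i) + b - ε))
      constructor
      · simp only [SMTFormula.val]; positivity
      · simp only [SMTFormula.val]
        rw [div_le_one (by linarith)]; linarith
  | ge w b =>
      have h := Real.exp_pos (-B * ((∑ i, w i * x i) + b + ε))
      constructor
      · simp only [SMTFormula.val]; positivity
      · simp only [SMTFormula.val]
        rw [div_le_one (by linarith)]; linarith
  | not F ih =>
      simp only [SMTFormula.val]; constructor <;> linarith [ih.1, ih.2]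
  | and F₁ F₂ ih1 ih2 =>
      simp only [SMTFormula.val]
      exact ⟨mul_nonneg ih1.1 ih2.1, by nlinarith [ih1.1, ih1.2, ih2.1, ih2.2]⟩
  | or F₁ F₂ ih1 ih2 =>
      simp only [SMTFormula.val]
      constructor <;> nlinarith [ih1.1, ih1.2, ih2.1, ih2.2]

lemma smt_limits {d : ℕ} (F : SMTFormula d) (x : Fin d → ℝ) (ε B : ℕ → ℝ)
    (hε : ∀ n, 0 < ε n) (hε0 : Tendsto ε atTop (𝓝 0))
    (hBε : Tendsto (fun n => B n * ε n) atTop atTop) :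
    (F.sem x → Tendsto (fun n => F.val x (B n) (ε n)) atTop (𝓝 1)) ∧
    (¬ F.sem x → Tendsto (fun n => F.val x (B n) (ε n)) atTop (𝓝 0)) := by
  have hBpos : ∀ᶠ n in atTop, 0 < B n :=
    (hBε.eventually_gt_atTop 0).mono (fun n h => by nlinarith [hε n])
  induction F with
  | gt w b =>
      set s : ℝ := (∑ i, w i * x i) + b with hs
      constructor
      · intro hsem
        have hspos : 0 < s := hsem
        have h1 : ∀ᶠ n in atTop, ε n ≤ s / 2 :=
          (hε0.eventually (gt_mem_nhds (by linarith : (0:ℝ) < s / 2))).mono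
            (fun n h => le_of_lt h)
        have hT : Tendsto (fun n => B n * (s - ε n)) atTop atTop := by
          refine tendsto_atTop_mono' atTop ?_ hBε
          filter_upwards [h1, hBpos] with n h hn
          have : ε n ≤ s - ε n := by linarith
          exact mul_le_mul_of_nonneg_left this hn.le
        have := sig_one hT
        refine this.congr fun n => ?_
        simp only [SMTFormula.val]; congr 2; rw [hs]; ring
      · intro hsem
        have hsle : s ≤ 0 := not_lt.mp hsem
        have hT : Tendsto (fun n => B n * (ε n - s)) atTop atTop := by
          refine tendsto_atTop_mono' atTop ?_ hBε
          filter_upwards [hBpos] with n hn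
          have : ε n ≤ ε n - s := by linarith
          exact mul_le_mul_of_nonneg_left this hn.le
        have := sig_zero hT
        refine this.congr fun n => ?_
        simp only [SMTFormula.val]; congr 2; rw [hs]; ring
  | ge w b =>
      set s : ℝ := (∑ i, w i * x i) + b with hs
      constructor
      · intro hsem
        have hsge : 0 ≤ s := hsem
        have hT : Tendsto (fun n => B n * (s + ε n)) atTop atTop := by
          refine tendsto_atTop_mono' atTop ?_ hBε
          filter_upwards [hBpos] with n hn
          have : ε n ≤ s + ε n := by linarith
          exact mul_le_mul_of_nonneg_left this hn.le
        have := sig_one hT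
        refine this.congr fun n => ?_
        simp only [SMTFormula.val]; congr 2; rw [hs]; ring
      · intro hsem
        have hslt : s < 0 := not_le.mp hsem
        have h1 : ∀ᶠ n in atTop, ε n ≤ -s / 2 :=
          (hε0.eventually (gt_mem_nhds (by linarith : (0:ℝ) < -s / 2))).mono
            (fun n h => le_of_lt h)
        have hT : Tendsto (fun n => B n * (-(s + ε n))) atTop atTop := by
          refine tendsto_atTop_mono' atTop ?_ hBε
          filter_upwards [h1, hBpos] with n h hn
          have : ε n ≤ -(s + ε n) := by linarith
          exact mul_le_mul_of_nonneg_left this hn.le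
        have := sig_zero hT
        refine this.congr fun n => ?_
        simp only [SMTFormula.val]; congr 2; rw [hs]; ring
  | not F ih =>
      constructor
      · intro hsem
        have h := ih.2 hsem
        have : Tendsto (fun n => 1 - F.val x (B n) (ε n)) atTop (𝓝 1) := by
          simpa using (tendsto_const_nhds (x := (1:ℝ))).sub h
        exact this.congr fun n => by simp [SMTFormula.val]
      · intro hsem
        have h := ih.1 (not_not.mp hsem)
        have : Tendsto (fun n => 1 - F.val x (B n) (ε n)) atTop (𝓝 0) := by
          simpa using (tendsto_const_nhds (x := (1:ℝ))).sub h
        exact this.congr fun n => by simp [SMTFormula.val]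
  | and F₁ F₂ ih1 ih2 =>
      constructor
      · rintro ⟨h1, h2⟩
        have := (ih1.1 h1).mul (ih2.1 h2)
        simpa [SMTFormula.val] using this
      · intro hsem
        by_cases h1 : F₁.sem x <;> by_cases h2 : F₂.sem x
        · exact absurd ⟨h1, h2⟩ hsem
        · simpa [SMTFormula.val] using (ih1.1 h1).mul (ih2.2 h2)
        · simpa [SMTFormula.val] using (ih1.2 h1).mul (ih2.1 h2)
        · simpa [SMTFormula.val] using (ih1.2 h1).mul (ih2.2 h2)
  | or F₁ F₂ ih1 ih2 =>
      have key : ∀ (a b : ℝ), Tendsto (fun n => F₁.val x (B n) (ε n)) atTop (𝓝 a) →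
          Tendsto (fun n => F₂.val x (B n) (ε n)) atTop (𝓝 b) →
          Tendsto (fun n => (F₁.or F₂).val x (B n) (ε n)) atTop (𝓝 (a + b - a * b)) := by
        intro a b ha hb
        simpa [SMTFormula.val] using (ha.add hb).sub (ha.mul hb)
      constructor
      · intro hsem
        by_cases h1 : F₁.sem x <;> by_cases h2 : F₂.sem x
        · simpa using key 1 1 (ih1.1 h1) (ih2.1 h2)
        · simpa using key 1 0 (ih1.1 h1) (ih2.2 h2)
        · simpa using key 0 1 (ih1.2 h1) (ih2.1 h2)
        · exact absurd hsem (by simp [SMTFormula.sem, h1, h2])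
      · intro hsem
        have h1 : ¬ F₁.sem x := fun h => hsem (Or.inl h)
        have h2 : ¬ F₂.sem x := fun h => hsem (Or.inr h)
        simpa using key 0 0 (ih1.2 h1) (ih2.2 h2)

theorem stmt_9 {d : ℕ} (F : SMTFormula d) :
    (∀ (x : Fin d → ℝ) (B ε : ℝ), 0 ≤ F.val x B ε ∧ F.val x B ε ≤ 1) ∧
    (∀ (x : Fin d → ℝ) (ε B : ℕ → ℝ),
      (∀ n, 0 < ε n) → Tendsto ε atTop (𝓝 0) →
      Tendsto (fun n => B n * ε n) atTop atTop →
      (F.sem x → Tendsto (fun n => F.val x (B n) (ε n)) atTop (𝓝 1)) ∧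
      (¬ F.sem x → Tendsto (fun n => F.val x (B n) (ε n)) atTop (𝓝 0))) :=
  ⟨fun x B ε => smt_bounds F x B ε,
   fun x ε B hε hε0 hBε => smt_limits F x ε B hε hε0 hBε⟩
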